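/- Let d ≥ 1, let p, c ∈ ℝ^d, B_X ∈ ℝ^{d×d}, let D ∈ ℝ^{d×d} be diagonal with strictly positive diagonal entries, let v₀ > 0, set K := (1 − (v₀ cᵀ D^{−1} c)/(1 + v₀ cᵀ D^{−1} c))·v₀, and define β := p + ((Id − B_X)ᵀ − p cᵀ) D^{−1} c · K. If j ∈ {1, …, d} satisfies p_j = 0, c_j = 0, and (B_X)_{k,j}·c_k = 0 for every k ∈ {1, …, d}, then β_j = 0. -/

import Mathlib

open Matrix

/-- If `X^j` lies outside the Markov blanket (`p_j = 0`, `c_j = 0`, and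
`(B_X)_{k,j} c_k = 0` for all `k`), then the population OLS coefficient `β_j` vanishes. -/
theorem ols_outside_markov_blanket {d : ℕ} (hd : 1 ≤ d)
    (p c : Fin d → ℝ) (B_X : Matrix (Fin d) (Fin d) ℝ)
    (dv : Fin d → ℝ) (hdv : ∀ k, 0 < dv k) (D : Matrix (Fin d) (Fin d) ℝ)
    (hD : D = diagonal dv) (v₀ : ℝ) (hv₀ : 0 < v₀) (K : ℝ)
    (hK : K = (1 - (v₀ * (c ⬝ᵥ (D⁻¹ *ᵥ c))) / (1 + v₀ * (c ⬝ᵥ (D⁻¹ *ᵥ c)))) * v₀)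
    (β : Fin d → ℝ)
    (hβ : β = p + K • ((((1 : Matrix (Fin d) (Fin d) ℝ) - B_X)ᵀ - vecMulVec p c) *ᵥ (D⁻¹ *ᵥ c)))
    (j : Fin d) (hpj : p j = 0) (hcj : c j = 0) (hBj : ∀ k : Fin d, B_X k j * c k = 0) :
    β j = 0 := by
  subst hβ hD
  rw [Matrix.inv_diagonal]
  simp only [Pi.add_apply, Pi.smul_apply, mulVec, dotProduct, Matrix.sub_apply, transpose_apply,
    one_apply, vecMulVec_apply, hpj, zero_mul, sub_zero, smul_eq_mul, diagonal_apply]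
  rw [Finset.sum_eq_zero, mul_zero, add_zero]
  intro k _
  rcases eq_or_ne j k with rfl | h
  · simp [hcj]
  · rcases mul_eq_zero.1 (hBj k) with h1 | h2
    · simp [h, Ne.symm h, h1]
    · simp [h, Ne.symm h, h2]
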